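/- Let m ≥ 1 and ε > 0. Suppose α(t,x) = A(t)x + b(t) with A : ℝ → ℝ^{m×m} and b : ℝ → ℝ^m continuous, β(t,x) = ½ xᵀQ(t)x + q(t)ᵀx + c(t) with Q : ℝ → ℝ^{m×m} continuous symmetric-valued, q : ℝ → ℝ^m, c : ℝ → ℝ continuous, and γ : ℝ → ℂ continuous (independent of x). Let X, P : ℝ → ℝ^m, S : ℝ → ℝ, a : ℝ → ℂ, and M, N : ℝ → ℝ^{m×m} be differentiable and satisfy X'(t) = α(t,X(t)), S'(t) = β(t,X(t)), P'(t) = ∇ₓβ(t,X(t)) − [∇ₓα(t,X(t))]ᵀ P(t), a'(t) = γ(t) a(t), M'(t) = −M(t)∇ₓα(t,X(t)) − [∇ₓα(t,X(t))]ᵀ M(t), N'(t) = ∇ₓ²(P(t)·α)(t,X(t)) − ∇ₓ²β(t,X(t)) − N(t)∇ₓα(t,X(t)) − [∇ₓα(t,X(t))]ᵀ N(t), with M(0), N(0) symmetric. Then the function U(t,x) = G^ε( M(t), N(t), X(t), P(t), S(t), a(t); x ) satisfies exactly, for all t and all x ∈ ℝ^m, the equation ∂ₜU(t,x) + α(t,x)ᵀ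 ∇ₓU(t,x) = (i/ε) β(t,x) U(t,x) + γ(t) U(t,x). -/

import Mathlib

open Matrix

/-- The Gaussian beam
`G^ε(M,N,X,P,S,A;x) = A exp(−(x−X)ᵀ(M+iN)(x−X)/(2ε) + iPᵀ(x−X)/ε + iS/ε)`,
on `ℝ^m` realized as the pi type `Fin m → ℝ`. -/
noncomputable def gaussianBeamP {m : ℕ} (ε : ℝ) (M N : Matrix (Fin m) (Fin m) ℝ)
    (X P : Fin m → ℝ) (S : ℝ) (A : ℂ) (x : Fin m → ℝ) : ℂ :=
  A * Complex.exp (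
    -((∑ i, ∑ j, ((M i j : ℂ) + Complex.I * (N i j : ℂ)) * ((x i - X i : ℝ) : ℂ)
        * ((x j - X j : ℝ) : ℂ)) / (2 * (ε : ℂ)))
    + Complex.I * ((∑ i, P i * (x i - X i) : ℝ) : ℂ) / (ε : ℂ)
    + Complex.I * (S : ℂ) / (ε : ℂ))

lemma gbDvswap {m : ℕ} (B : Matrix (Fin m) (Fin m) ℂ) (v w : Fin m → ℂ) :
    v ⬝ᵥ (B *ᵥ w) = (Bᵀ *ᵥ v) ⬝ᵥ w := by
  rw [Matrix.dotProduct_mulVec, ← Matrix.mulVec_transpose]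

lemma gbKey {m : ℕ} (e : ℂ) (he : e ≠ 0) (Cm Ac Qc : Matrix (Fin m) (Fin m) ℂ)
    (hQ : Qcᵀ = Qc) (d Xc Pc bc qc : Fin m → ℂ) (cc : ℂ) :
    -(1/(2*e)) * (d ⬝ᵥ ((-(Cm * Ac) - Acᵀ * Cm - Complex.I • Qc) *ᵥ d)
        - (Ac *ᵥ Xc + bc) ⬝ᵥ (Cm *ᵥ d) - d ⬝ᵥ (Cm *ᵥ (Ac *ᵥ Xc + bc)))
    + Complex.I * (1/e) * ((Qc *ᵥ Xc + qc - Acᵀ *ᵥ Pc) ⬝ᵥ d - Pc ⬝ᵥ (Ac *ᵥ Xc + bc))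
    + Complex.I * ((1/2) * (Xc ⬝ᵥ (Qc *ᵥ Xc)) + qc ⬝ᵥ Xc + cc) / e
    + ((Ac *ᵥ (Xc + d) + bc) ⬝ᵥ (fun k => -(1/(2*e)) * ((Cmᵀ *ᵥ d) k + (Cm *ᵥ d) k) + Complex.I * (1/e) * Pc k))
    = Complex.I / e * ((1/2) * ((Xc + d) ⬝ᵥ (Qc *ᵥ (Xc + d))) + qc ⬝ᵥ (Xc + d) + cc) := by
  have h1 : d ⬝ᵥ ((Cm * Ac) *ᵥ d) = (Ac *ᵥ d) ⬝ᵥ (Cmᵀ *ᵥ d) := by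
    rw [← Matrix.mulVec_mulVec, gbDvswap, dotProduct_comm]
  have h2 : d ⬝ᵥ ((Acᵀ * Cm) *ᵥ d) = (Ac *ᵥ d) ⬝ᵥ (Cm *ᵥ d) := by
    rw [← Matrix.mulVec_mulVec, gbDvswap, transpose_transpose]
  have h3a : d ⬝ᵥ (Cm *ᵥ (Ac *ᵥ Xc)) = (Ac *ᵥ Xc) ⬝ᵥ (Cmᵀ *ᵥ d) := by
    rw [gbDvswap, dotProduct_comm]
  have h3b : d ⬝ᵥ (Cm *ᵥ bc) = bc ⬝ᵥ (Cmᵀ *ᵥ d) := by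
    rw [gbDvswap, dotProduct_comm]
  have h7 : Pc ⬝ᵥ (Ac *ᵥ Xc) = (Ac *ᵥ Xc) ⬝ᵥ Pc := dotProduct_comm _ _
  have h8 : Pc ⬝ᵥ bc = bc ⬝ᵥ Pc := dotProduct_comm _ _
  have h9 : Pc ⬝ᵥ (Ac *ᵥ d) = (Ac *ᵥ d) ⬝ᵥ Pc := dotProduct_comm _ _
  have h4 : (Acᵀ *ᵥ Pc) ⬝ᵥ d = Pc ⬝ᵥ (Ac *ᵥ d) := by
    rw [dotProduct_comm, gbDvswap, transpose_transpose, dotProduct_comm]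
  have h5 : (Qc *ᵥ Xc) ⬝ᵥ d = Xc ⬝ᵥ (Qc *ᵥ d) := by
    rw [dotProduct_comm, gbDvswap, hQ, dotProduct_comm]
  have h6 : d ⬝ᵥ (Qc *ᵥ Xc) = Xc ⬝ᵥ (Qc *ᵥ d) := by
    rw [gbDvswap, hQ, dotProduct_comm]
  have hg : (fun k => -(1/(2*e)) * ((Cmᵀ *ᵥ d) k + (Cm *ᵥ d) k) + Complex.I * (1/e) * Pc k)
      = -(1/(2*e)) • (Cmᵀ *ᵥ d + Cm *ᵥ d) + (Complex.I * (1/e)) • Pc := by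
    funext k; simp [Pi.smul_apply, smul_eq_mul]; ring
  rw [hg]
  simp only [Matrix.sub_mulVec, Matrix.neg_mulVec, Matrix.add_mulVec, Matrix.smul_mulVec,
    Matrix.mulVec_add, dotProduct_add, add_dotProduct, dotProduct_sub, sub_dotProduct,
    dotProduct_neg, neg_dotProduct, dotProduct_smul, smul_dotProduct, smul_eq_mul]
  rw [h1, h2, h3a, h3b, h4, h5, h6, h7, h8, h9]
  field_simp
  ring_nf

-- cast helpers
lemma gbCastSum {m : ℕ} (f : Fin m → ℝ) : ((∑ i, f i : ℝ) : ℂ) = ∑ i, ((f i : ℝ) : ℂ) := by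
  push_cast; rfl

/-- When `α(t,x) = A(t)x + b(t)` is affine in `x`, `β(t,x) = ½xᵀQ(t)x + q(t)ᵀx + c(t)`
is quadratic in `x`, and `γ = γ(t)` is independent of `x`, the Gaussian beam ansatz
whose parameters solve the beam ODE system satisfies the transport equation
`∂ₜU + αᵀ∇ₓU = (i/ε)βU + γU` exactly (no `O(ε^{1/2})` residual). -/
theorem gaussianBeam_exact_affine_quadratic {m : ℕ} (hm : 1 ≤ m) (ε : ℝ) (hε : 0 < ε)
    (A : ℝ → Matrix (Fin m) (Fin m) ℝ) (b : ℝ → Fin m → ℝ)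
    (hA : ∀ i j, Continuous fun t => A t i j) (hb : ∀ i, Continuous fun t => b t i)
    (Q : ℝ → Matrix (Fin m) (Fin m) ℝ) (hQsymm : ∀ t, (Q t).IsSymm)
    (hQ : ∀ i j, Continuous fun t => Q t i j)
    (q : ℝ → Fin m → ℝ) (hq : ∀ i, Continuous fun t => q t i)
    (c : ℝ → ℝ) (hc : Continuous c)
    (γ : ℝ → ℂ) (hγ : Continuous γ)
    (X P : ℝ → Fin m → ℝ) (S : ℝ → ℝ) (a : ℝ → ℂ)
    (M N : ℝ → Matrix (Fin m) (Fin m) ℝ)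
    (hX : ∀ t i, HasDerivAt (fun s => X s i) ((A t *ᵥ X t + b t) i) t)
    (hS : ∀ t, HasDerivAt S
      ((1 / 2) * (X t ⬝ᵥ (Q t *ᵥ X t)) + q t ⬝ᵥ X t + c t) t)
    (hP : ∀ t i, HasDerivAt (fun s => P s i)
      ((Q t *ᵥ X t + q t - (A t)ᵀ *ᵥ P t) i) t)
    (ha : ∀ t, HasDerivAt a (γ t * a t) t)
    (hM : ∀ t i j, HasDerivAt (fun s => M s i j)
      ((-(M t * A t) - (A t)ᵀ * M t) i j) t)
    (hN : ∀ t i j, HasDerivAt (fun s => N s i j)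
      ((-(Q t) - N t * A t - (A t)ᵀ * N t) i j) t)
    (hM0 : (M 0).IsSymm) (hN0 : (N 0).IsSymm) :
    ∀ (t : ℝ) (x : Fin m → ℝ),
      DifferentiableAt ℝ
        (fun y => gaussianBeamP ε (M t) (N t) (X t) (P t) (S t) (a t) y) x ∧
      HasDerivAt (fun s => gaussianBeamP ε (M s) (N s) (X s) (P s) (S s) (a s) x)
        ((Complex.I / (ε : ℂ))
            * (((1 / 2) * (x ⬝ᵥ (Q t *ᵥ x)) + q t ⬝ᵥ x + c t : ℝ) : ℂ)
            * gaussianBeamP ε (M t) (N t) (X t) (P t) (S t) (a t) x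
          + γ t * gaussianBeamP ε (M t) (N t) (X t) (P t) (S t) (a t) x
          - ∑ i, (((A t *ᵥ x + b t) i : ℝ) : ℂ)
              * fderiv ℝ (fun y => gaussianBeamP ε (M t) (N t) (X t) (P t) (S t) (a t) y)
                  x (Pi.single i 1)) t := by
  intro t x
  set e : ℂ := (ε : ℂ) with he_def
  have he : e ≠ 0 := by
    simp only [he_def, Ne, Complex.ofReal_eq_zero]; exact hε.ne'
  -- complex data
  set Cm : Matrix (Fin m) (Fin m) ℂ :=
    Matrix.of (fun i j => ((M t i j : ℝ) : ℂ) + Complex.I * ((N t i j : ℝ) : ℂ)) with hCm_def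
  set Ac : Matrix (Fin m) (Fin m) ℂ := Matrix.of (fun i j => ((A t i j : ℝ) : ℂ)) with hAc_def
  set Qc : Matrix (Fin m) (Fin m) ℂ := Matrix.of (fun i j => ((Q t i j : ℝ) : ℂ)) with hQc_def
  set d : Fin m → ℂ := fun i => ((x i - X t i : ℝ) : ℂ) with hd_def
  set Xc : Fin m → ℂ := fun i => ((X t i : ℝ) : ℂ) with hXc_def
  set Pc : Fin m → ℂ := fun i => ((P t i : ℝ) : ℂ) with hPc_def
  set bc : Fin m → ℂ := fun i => ((b t i : ℝ) : ℂ) with hbc_def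
  set qc : Fin m → ℂ := fun i => ((q t i : ℝ) : ℂ) with hqc_def
  -- nice form of the beam in space
  have hfunx : (fun y => gaussianBeamP ε (M t) (N t) (X t) (P t) (S t) (a t) y)
      = (fun y : Fin m → ℝ => a t * Complex.exp
        (-(1/(2*e)) * ∑ i, ∑ j, Cm i j * ((y i - X t i : ℝ) : ℂ) * ((y j - X t j : ℝ) : ℂ)
          + Complex.I * (1/e) * ((∑ i, P t i * (y i - X t i) : ℝ) : ℂ)
          + Complex.I * ((S t : ℝ) : ℂ) / e)) := by
    funext y
    have key : ∀ (s r S' : ℂ), -(s/(2*e)) + Complex.I * r/e + Complex.I * S'/e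
        = -(1/(2*e))*s + Complex.I*(1/e)*r + Complex.I*S'/e := by intros; ring
    simp only [gaussianBeamP, hCm_def, Matrix.of_apply, he_def]
    congr 1
    exact congrArg Complex.exp (key _ _ _)
  -- spatial derivative
  have hproj : ∀ i, HasFDerivAt (fun y : Fin m → ℝ => y i - X t i)
      (ContinuousLinearMap.proj i : (Fin m → ℝ) →L[ℝ] ℝ) x := fun i =>
    (ContinuousLinearMap.proj i : (Fin m → ℝ) →L[ℝ] ℝ).hasFDerivAt.sub_const (X t i)
  have hd : ∀ i, HasFDerivAt (fun y : Fin m → ℝ => ((y i - X t i : ℝ) : ℂ))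
      ((Complex.ofRealCLM).comp (ContinuousLinearMap.proj i)) x := fun i =>
    Complex.ofRealCLM.hasFDerivAt.comp x (hproj i)
  have hsum1 := HasFDerivAt.fun_sum (u := Finset.univ) fun i (_ : i ∈ Finset.univ) =>
    HasFDerivAt.fun_sum (u := Finset.univ) fun j (_ : j ∈ Finset.univ) =>
      ((hd i).const_mul (Cm i j)).fun_mul (hd j)
  have hr := HasFDerivAt.fun_sum (u := Finset.univ) fun i (_ : i ∈ Finset.univ) =>
    (hproj i).const_mul (P t i)
  have hrc : HasFDerivAt (fun y : Fin m → ℝ => ((∑ i, P t i * (y i - X t i) : ℝ) : ℂ))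
      (Complex.ofRealCLM.comp (∑ i, P t i • (ContinuousLinearMap.proj i : (Fin m → ℝ) →L[ℝ] ℝ))) x :=
    Complex.ofRealCLM.hasFDerivAt.comp x hr
  have hphasex := (((hsum1.const_mul (-(1/(2*e)))).fun_add
      (hrc.const_mul (Complex.I * (1/e)))).add_const (Complex.I * ((S t : ℝ) : ℂ) / e))
  have hUx := hphasex.cexp.const_mul (a t)
  have hdiff : DifferentiableAt ℝ
      (fun y => gaussianBeamP ε (M t) (N t) (X t) (P t) (S t) (a t) y) x := by
    rw [hfunx]; exact hUx.differentiableAt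
  -- value of the beam at x
  have hUxval : gaussianBeamP ε (M t) (N t) (X t) (P t) (S t) (a t) x
      = a t * Complex.exp
        (-(1/(2*e)) * ∑ i, ∑ j, Cm i j * d i * d j
          + Complex.I * (1/e) * ((∑ i, P t i * (x i - X t i) : ℝ) : ℂ)
          + Complex.I * ((S t : ℝ) : ℂ) / e) := congrFun hfunx x
  -- evaluation of the spatial fderiv at Pi.single k 1
  have heval : ∀ k, fderiv ℝ
      (fun y => gaussianBeamP ε (M t) (N t) (X t) (P t) (S t) (a t) y) x (Pi.single k 1)
      = gaussianBeamP ε (M t) (N t) (X t) (P t) (S t) (a t) x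
        * (-(1/(2*e)) * ((∑ i, Cm i k * d i) + (∑ j, d j * Cm k j))
            + Complex.I * (1/e) * Pc k) := by
    intro k
    rw [hfunx, hUx.fderiv, hUxval]
    simp only [ContinuousLinearMap.smul_apply, ContinuousLinearMap.add_apply,
      ContinuousLinearMap.sum_apply, ContinuousLinearMap.comp_apply,
      ContinuousLinearMap.proj_apply, ContinuousLinearMap.coe_smul', Pi.smul_apply,
      Pi.single_apply, Complex.ofRealCLM_apply, apply_ite Complex.ofReal, Complex.ofReal_one,
      Complex.ofReal_zero, smul_eq_mul, mul_ite, mul_one, mul_zero, ite_mul, zero_mul,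
      Finset.sum_add_distrib, Finset.sum_ite_irrel, Finset.sum_const_zero,
      Finset.sum_ite_eq, Finset.sum_ite_eq', Finset.mem_univ, if_true]
    simp only [hd_def, hPc_def]
    ring
  refine ⟨hdiff, ?_⟩
  -- time derivative
  have hfunt : (fun s => gaussianBeamP ε (M s) (N s) (X s) (P s) (S s) (a s) x)
      = (fun s : ℝ => a s * Complex.exp
        (-(1/(2*e)) * ∑ i, ∑ j, ((M s i j : ℂ) + Complex.I * (N s i j : ℂ))
            * ((x i - X s i : ℝ) : ℂ) * ((x j - X s j : ℝ) : ℂ)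
          + Complex.I * (1/e) * ((∑ i, P s i * (x i - X s i) : ℝ) : ℂ)
          + Complex.I * ((S s : ℝ) : ℂ) / e)) := by
    have key : ∀ (s r S' : ℂ), -(s/(2*e)) + Complex.I * r/e + Complex.I * S'/e
        = -(1/(2*e))*s + Complex.I*(1/e)*r + Complex.I*S'/e := by intros; ring
    funext s
    simp only [gaussianBeamP, he_def]
    congr 1
    exact congrArg Complex.exp (key _ _ _)
  have hXd : ∀ i, HasDerivAt (fun s => ((x i - X s i : ℝ) : ℂ))
      ((-((A t *ᵥ X t + b t) i) : ℝ) : ℂ) t := fun i =>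
    (HasDerivAt.const_sub (x i) (hX t i)).ofReal_comp
  have hCt : ∀ i j, HasDerivAt (fun s => ((M s i j : ℂ) + Complex.I * (N s i j : ℂ)))
      ((((-(M t * A t) - (A t)ᵀ * M t) i j : ℝ) : ℂ)
        + Complex.I * (((-(Q t) - N t * A t - (A t)ᵀ * N t) i j : ℝ) : ℂ)) t := fun i j =>
    ((hM t i j).ofReal_comp).add (((hN t i j).ofReal_comp).const_mul Complex.I)
  have hsum1t := HasDerivAt.fun_sum (u := Finset.univ) fun i (_ : i ∈ Finset.univ) =>
    HasDerivAt.fun_sum (u := Finset.univ) fun j (_ : j ∈ Finset.univ) =>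
      ((hCt i j).fun_mul (hXd i)).fun_mul (hXd j)
  have hrt := HasDerivAt.fun_sum (u := Finset.univ) fun i (_ : i ∈ Finset.univ) =>
    (hP t i).fun_mul (HasDerivAt.const_sub (x i) (hX t i))
  have hrct := hrt.ofReal_comp
  have hSt := (((hS t).ofReal_comp).const_mul Complex.I).div_const e
  have hphaset := ((hsum1t.const_mul (-(1/(2*e)))).fun_add
      (hrct.const_mul (Complex.I * (1/e)))).fun_add hSt
  have hUt := (ha t).fun_mul hphaset.cexp
  rw [hfunt]
  convert hUt using 1
  · rfl
  simp only [heval, hUxval]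
  simp only [hCm_def, Matrix.of_apply, hd_def, hPc_def]
  have hident : (-(1/(2*e)) * ∑ i, ∑ j,
        ((((((-(M t * A t) - (A t)ᵀ * M t) i j : ℝ) : ℂ)
              + Complex.I * (((-(Q t) - N t * A t - (A t)ᵀ * N t) i j : ℝ) : ℂ))
                * ((x i - X t i : ℝ) : ℂ)
            + (((M t i j : ℝ) : ℂ) + Complex.I * ((N t i j : ℝ) : ℂ))
                * ((-((A t *ᵥ X t + b t) i) : ℝ) : ℂ)) * ((x j - X t j : ℝ) : ℂ)
          + (((M t i j : ℝ) : ℂ) + Complex.I * ((N t i j : ℝ) : ℂ)) * ((x i - X t i : ℝ) : ℂ)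
              * ((-((A t *ᵥ X t + b t) j) : ℝ) : ℂ))
      + Complex.I * (1/e) * ((∑ i, ((Q t *ᵥ X t + q t - (A t)ᵀ *ᵥ P t) i * (x i - X t i)
          + P t i * -((A t *ᵥ X t + b t) i)) : ℝ) : ℂ)
      + Complex.I * ((1/2 * (X t ⬝ᵥ Q t *ᵥ X t) + q t ⬝ᵥ X t + c t : ℝ) : ℂ) / e)
      + ∑ k, (((A t *ᵥ x + b t) k : ℝ) : ℂ)
          * (-(1/(2*e)) * ((∑ i, (((M t i k : ℝ) : ℂ) + Complex.I * ((N t i k : ℝ) : ℂ))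
                * ((x i - X t i : ℝ) : ℂ))
              + ∑ j, ((x j - X t j : ℝ) : ℂ)
                * (((M t k j : ℝ) : ℂ) + Complex.I * ((N t k j : ℝ) : ℂ)))
            + Complex.I * (1/e) * ((P t k : ℝ) : ℂ))
      = Complex.I/e * ((1/2 * (x ⬝ᵥ Q t *ᵥ x) + q t ⬝ᵥ x + c t : ℝ) : ℂ) := by
    have hQc' : Qcᵀ = Qc := by
      ext i j
      have hsym : Q t j i = Q t i j := congrFun (congrFun (hQsymm t) i) j
      simp [hQc_def, Matrix.transpose_apply, hsym]
    have hCmA : ∀ i j, (Cm * Ac) i j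
        = (((M t * A t) i j : ℝ) : ℂ) + Complex.I * (((N t * A t) i j : ℝ) : ℂ) := by
      intro i j
      simp only [Matrix.mul_apply, hCm_def, hAc_def, Matrix.of_apply]
      push_cast
      rw [Finset.mul_sum, ← Finset.sum_add_distrib]
      exact Finset.sum_congr rfl fun l _ => by ring
    have hAcCm : ∀ i j, (Acᵀ * Cm) i j
        = ((((A t)ᵀ * M t) i j : ℝ) : ℂ) + Complex.I * ((((A t)ᵀ * N t) i j : ℝ) : ℂ) := by
      intro i j
      simp only [Matrix.mul_apply, hCm_def, hAc_def, Matrix.of_apply, Matrix.transpose_apply]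
      push_cast
      rw [Finset.mul_sum, ← Finset.sum_add_distrib]
      exact Finset.sum_congr rfl fun l _ => by ring
    have hC'entry : ∀ i j, (-(Cm * Ac) - Acᵀ * Cm - Complex.I • Qc) i j
        = (((-(M t * A t) - (A t)ᵀ * M t) i j : ℝ) : ℂ)
          + Complex.I * (((-(Q t) - N t * A t - (A t)ᵀ * N t) i j : ℝ) : ℂ) := by
      intro i j
      simp only [Matrix.sub_apply, Matrix.neg_apply, Matrix.smul_apply, hCmA, hAcCm,
        hQc_def, Matrix.of_apply, smul_eq_mul]
      push_cast
      ring
    have hXv : ∀ i, (Ac *ᵥ Xc + bc) i = (((A t *ᵥ X t + b t) i : ℝ) : ℂ) := by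
      intro i
      simp only [Matrix.mulVec, dotProduct, Pi.add_apply, hAc_def, hXc_def, hbc_def,
        Matrix.of_apply]
      push_cast
      ring
    have hPv : ∀ i, (Qc *ᵥ Xc + qc - Acᵀ *ᵥ Pc) i
        = (((Q t *ᵥ X t + q t - (A t)ᵀ *ᵥ P t) i : ℝ) : ℂ) := by
      intro i
      simp only [Matrix.mulVec, dotProduct, Pi.add_apply, Pi.sub_apply, hQc_def, hXc_def,
        hqc_def, hAc_def, hPc_def, Matrix.of_apply, Matrix.transpose_apply]
      push_cast
      ring
    have hxv : ∀ i, (Ac *ᵥ (Xc + d) + bc) i = (((A t *ᵥ x + b t) i : ℝ) : ℂ) := by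
      intro i
      simp only [Matrix.mulVec, dotProduct, Pi.add_apply, hAc_def, hXc_def, hbc_def,
        hd_def, Matrix.of_apply]
      push_cast
      rw [Finset.sum_congr rfl (fun l (_ : l ∈ Finset.univ) =>
        show (A t i l : ℂ) * ((X t l : ℂ) + ((x l : ℂ) - (X t l : ℂ)))
          = (A t i l : ℂ) * (x l : ℂ) by ring)]
    have hP1 : (∑ i, ∑ j,
          ((((((-(M t * A t) - (A t)ᵀ * M t) i j : ℝ) : ℂ)
                + Complex.I * (((-(Q t) - N t * A t - (A t)ᵀ * N t) i j : ℝ) : ℂ))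
                  * ((x i - X t i : ℝ) : ℂ)
              + (((M t i j : ℝ) : ℂ) + Complex.I * ((N t i j : ℝ) : ℂ))
                  * ((-((A t *ᵥ X t + b t) i) : ℝ) : ℂ)) * ((x j - X t j : ℝ) : ℂ)
            + (((M t i j : ℝ) : ℂ) + Complex.I * ((N t i j : ℝ) : ℂ)) * ((x i - X t i : ℝ) : ℂ)
                * ((-((A t *ᵥ X t + b t) j) : ℝ) : ℂ)))
        = d ⬝ᵥ ((-(Cm * Ac) - Acᵀ * Cm - Complex.I • Qc) *ᵥ d)
          - (Ac *ᵥ Xc + bc) ⬝ᵥ (Cm *ᵥ d) - d ⬝ᵥ (Cm *ᵥ (Ac *ᵥ Xc + bc)) := by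
      simp only [dotProduct, Matrix.mulVec, Finset.mul_sum, ← Finset.sum_sub_distrib]
      refine Finset.sum_congr rfl fun i _ => Finset.sum_congr rfl fun j _ => ?_
      rw [hC'entry i j, hXv i, hXv j]
      simp only [hCm_def, hd_def, Matrix.of_apply]
      push_cast
      ring
    have hP2 : ((∑ i, ((Q t *ᵥ X t + q t - (A t)ᵀ *ᵥ P t) i * (x i - X t i)
          + P t i * -((A t *ᵥ X t + b t) i)) : ℝ) : ℂ)
        = (Qc *ᵥ Xc + qc - Acᵀ *ᵥ Pc) ⬝ᵥ d - Pc ⬝ᵥ (Ac *ᵥ Xc + bc) := by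
      rw [gbCastSum]
      simp only [dotProduct, ← Finset.sum_sub_distrib]
      refine Finset.sum_congr rfl fun i _ => ?_
      rw [hPv i, hXv i]
      simp only [hPc_def, hd_def]
      push_cast
      ring
    have hP3 : ((1/2 * (X t ⬝ᵥ Q t *ᵥ X t) + q t ⬝ᵥ X t + c t : ℝ) : ℂ)
        = 1/2 * (Xc ⬝ᵥ (Qc *ᵥ Xc)) + qc ⬝ᵥ Xc + (c t : ℂ) := by
      simp only [dotProduct, Matrix.mulVec, hQc_def, hXc_def, hqc_def, Matrix.of_apply,
        Finset.mul_sum]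
      push_cast
      ring
    have hP5 : ((1/2 * (x ⬝ᵥ Q t *ᵥ x) + q t ⬝ᵥ x + c t : ℝ) : ℂ)
        = 1/2 * ((Xc + d) ⬝ᵥ (Qc *ᵥ (Xc + d))) + qc ⬝ᵥ (Xc + d) + (c t : ℂ) := by
      have hXd : ∀ l, (Xc + d) l = (x l : ℂ) := by
        intro l; simp only [Pi.add_apply, hXc_def, hd_def]; push_cast; ring
      simp only [dotProduct, Matrix.mulVec, hQc_def, hqc_def, Matrix.of_apply,
        Finset.mul_sum, hXd]
      push_cast
      ring
    have hP4 : (∑ k, (((A t *ᵥ x + b t) k : ℝ) : ℂ)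
          * (-(1/(2*e)) * ((∑ i, (((M t i k : ℝ) : ℂ) + Complex.I * ((N t i k : ℝ) : ℂ))
                * ((x i - X t i : ℝ) : ℂ))
              + ∑ j, ((x j - X t j : ℝ) : ℂ)
                * (((M t k j : ℝ) : ℂ) + Complex.I * ((N t k j : ℝ) : ℂ)))
            + Complex.I * (1/e) * ((P t k : ℝ) : ℂ)))
        = ((Ac *ᵥ (Xc + d) + bc) ⬝ᵥ (fun k => -(1/(2*e)) * ((Cmᵀ *ᵥ d) k + (Cm *ᵥ d) k)
            + Complex.I * (1/e) * Pc k)) := by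
      simp only [dotProduct]
      refine Finset.sum_congr rfl fun k _ => ?_
      rw [hxv k]
      simp only [Matrix.mulVec, dotProduct, Matrix.transpose_apply, hCm_def, hd_def,
        hPc_def, Matrix.of_apply]
      rw [Finset.sum_congr rfl (fun j (_ : j ∈ Finset.univ) =>
        mul_comm (((x j - X t j : ℝ) : ℂ))
          ((((M t k j : ℝ) : ℂ) + Complex.I * ((N t k j : ℝ) : ℂ))))]
    rw [hP1, hP2, hP3, hP5, hP4]
    exact gbKey e he Cm Ac Qc hQc' d Xc Pc bc qc (c t)
  set EX : ℂ := Complex.exp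
    (-(1/(2*e)) * ∑ i, ∑ j, (((M t i j : ℝ) : ℂ) + Complex.I * ((N t i j : ℝ) : ℂ))
        * ((x i - X t i : ℝ) : ℂ) * ((x j - X t j : ℝ) : ℂ)
      + Complex.I * (1/e) * ((∑ i, P t i * (x i - X t i) : ℝ) : ℂ)
      + Complex.I * ((S t : ℝ) : ℂ) / e) with hEX
  rw [show ∑ x_1 : Fin m, (((A t *ᵥ x + b t) x_1 : ℝ) : ℂ) * (a t * EX
      * (-(1/(2*e)) * ((∑ i, (((M t i x_1 : ℝ) : ℂ) + Complex.I * ((N t i x_1 : ℝ) : ℂ))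
            * ((x i - X t i : ℝ) : ℂ))
          + ∑ j, ((x j - X t j : ℝ) : ℂ)
            * (((M t x_1 j : ℝ) : ℂ) + Complex.I * ((N t x_1 j : ℝ) : ℂ)))
        + Complex.I * (1/e) * ((P t x_1 : ℝ) : ℂ)))
    = (a t * EX) * ∑ k, (((A t *ᵥ x + b t) k : ℝ) : ℂ)
        * (-(1/(2*e)) * ((∑ i, (((M t i k : ℝ) : ℂ) + Complex.I * ((N t i k : ℝ) : ℂ))
              * ((x i - X t i : ℝ) : ℂ))
            + ∑ j, ((x j - X t j : ℝ) : ℂ)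
              * (((M t k j : ℝ) : ℂ) + Complex.I * ((N t k j : ℝ) : ℂ)))
          + Complex.I * (1/e) * ((P t k : ℝ) : ℂ)) by
      rw [Finset.mul_sum]; exact Finset.sum_congr rfl fun k _ => by ring]
  linear_combination (-(a t * EX)) * hident
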